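/- If $A$ is a subring of the field of algebraic numbers (the algebraic closure of $\mathbb{Q}$), then the only factroids of $A$ are $\{0\}$ and $A$. -/

import Mathlib

open Polynomial

/-- Every nonzero element of a subring of the algebraic numbers divides a nonzero integer. -/
lemma aux_dvd_int (A : Subring (AlgebraicClosure ℚ)) (a : A) (ha : a ≠ 0) :
    ∃ m : A, ∃ c : ℤ, c ≠ 0 ∧ m * a = (c : A) := by
  set x : AlgebraicClosure ℚ := (a : AlgebraicClosure ℚ) with hx
  have hx0 : x ≠ 0 := by
    simpa [hx] using fun h => ha (Subtype.ext h)
  have halg : IsAlgebraic ℚ x := (AlgebraicClosure.isAlgebraic ℚ).isAlgebraic x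
  have halgZ : IsAlgebraic ℤ x := (IsFractionRing.isAlgebraic_iff ℤ ℚ _).mpr halg
  obtain ⟨p, hp, hpx⟩ := halgZ
  obtain ⟨q, hq, hqnd⟩ := p.exists_eq_pow_rootMultiplicity_mul_and_not_dvd hp 0
  have hc0 : q.coeff 0 ≠ 0 := by
    intro h
    exact hqnd (by simpa using (X_dvd_iff).mpr h)
  -- aeval x q = 0
  have hq0 : aeval x q = 0 := by
    have : aeval x p = (x - 0) ^ (p.rootMultiplicity 0) * aeval x q := by
      conv_lhs => rw [hq]
      simp
    rw [hpx] at this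
    have hxp : (x - 0) ^ (p.rootMultiplicity 0) ≠ 0 :=
      pow_ne_zero _ (by simpa using hx0)
    exact (mul_eq_zero.mp this.symm).resolve_left hxp
  -- now evaluate in A
  have hq0A : aeval a q = 0 := by
    apply Subtype.ext
    have := Polynomial.aeval_algHom_apply (A.subtype.toIntAlgHom) a q
    simpa [hx] using this.symm.trans hq0
  refine ⟨-(aeval a q.divX), q.coeff 0, hc0, ?_⟩
  have key : aeval a (X * q.divX + C (q.coeff 0)) = 0 := by
    rw [X_mul_divX_add]; exact hq0A
  simp only [map_add, map_mul, aeval_X, aeval_C] at key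
  rw [algebraMap_int_eq, eq_intCast] at key
  linear_combination -key

/-- If `A` is a subring of the field of algebraic numbers, then the only factroids of
`A` are `{0}` and `A`. -/
theorem stmt_14 (A : Subring (AlgebraicClosure ℚ)) (F : AddSubgroup A)
    (hF : ∀ b a : A, b ≠ 0 → b * a ∈ F → a ∈ F) :
    F = ⊥ ∨ F = ⊤ := by
  by_cases hbot : F = ⊥
  · exact Or.inl hbot
  right
  obtain ⟨x, hxF, hx0⟩ : ∃ x ∈ F, x ≠ 0 := by
    by_contra h
    push_neg at h
    apply hbot
    ext y
    simp only [AddSubgroup.mem_bot]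
    exact ⟨fun hy => h y hy, fun hy => hy ▸ F.zero_mem⟩
  ext a
  simp only [AddSubgroup.mem_top, iff_true]
  by_cases ha : a = 0
  · exact ha ▸ F.zero_mem
  obtain ⟨m, c, hc, hma⟩ := aux_dvd_int A a ha
  have hm : m ≠ 0 := by
    rintro rfl
    apply hc
    have : ((c : ℤ) : A) = 0 := by rw [← hma]; ring
    exact_mod_cast this
  have hb : m * x ≠ 0 := mul_ne_zero hm hx0
  apply hF (m * x) a hb
  have : m * x * a = c • x := by
    rw [zsmul_eq_mul, ← hma]; ring
  rw [this]
  exact F.zsmul_mem hxF c
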